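/- Let x generate an infinite cyclic group, let d, r be positive integers, and let y be another element with ⟨x⟩ ∩ ⟨y⟩ = ⟨x^d⟩ = ⟨y^d⟩. Then ⟨x^r⟩ ∩ ⟨y^r⟩ = ⟨x^{rd/gcd(r,d)}⟩, so the index of ⟨x^r⟩ ∩ ⟨y^r⟩ in ⟨x^r⟩ equals d / gcd(r,d). -/

import Mathlib

lemma relindex_zpowers_pow_aux {G : Type*} [Group G] (g : G) (hg : ¬ IsOfFinOrder g) (m : ℕ) :
    (Subgroup.zpowers (g ^ m)).relIndex (Subgroup.zpowers g) = m := by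
  have hinj : Function.Injective (fun n : ℤ => g ^ n) :=
    injective_zpow_iff_not_isOfFinOrder.2 hg
  set f : Multiplicative ℤ →* G := zpowersHom G g with hf
  have hfapp : ∀ n : Multiplicative ℤ, f n = g ^ (Multiplicative.toAdd n) := fun n => rfl
  have hrange : f.range = Subgroup.zpowers g := by
    ext z
    simp only [MonoidHom.mem_range, Subgroup.mem_zpowers_iff, hfapp]
    constructor
    · rintro ⟨n, hn⟩; exact ⟨Multiplicative.toAdd n, hn⟩
    · rintro ⟨k, hk⟩; exact ⟨Multiplicative.ofAdd k, hk⟩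
  have hcomap : (Subgroup.zpowers (g ^ m)).comap f
      = Subgroup.zpowers (Multiplicative.ofAdd (m : ℤ)) := by
    ext n
    simp only [Subgroup.mem_comap, Subgroup.mem_zpowers_iff, hfapp]
    constructor
    · rintro ⟨k, hk⟩
      refine ⟨k, ?_⟩
      have : g ^ ((m : ℤ) * k) = g ^ (Multiplicative.toAdd n) := by
        rw [zpow_mul, zpow_natCast g m]; exact hk
      have h2 := hinj this
      apply Multiplicative.toAdd.injective
      simpa [mul_comm] using h2
    · rintro ⟨k, hk⟩
      refine ⟨k, ?_⟩
      rw [← zpow_natCast g m, ← zpow_mul]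
      have : k * (m : ℤ) = Multiplicative.toAdd n := by
        simpa using congrArg Multiplicative.toAdd hk
      rw [mul_comm, this]
  have key : Subgroup.zpowers (Multiplicative.ofAdd (m : ℤ))
      = AddSubgroup.toSubgroup (AddSubgroup.zmultiples (m : ℤ)) := by
    ext n
    simp only [Subgroup.mem_zpowers_iff]
    constructor
    · rintro ⟨k, hk⟩
      have : k * (m : ℤ) = Multiplicative.toAdd n := by
        simpa using congrArg Multiplicative.toAdd hk
      exact ⟨k, by simpa [smul_eq_mul] using this⟩
    · rintro ⟨k, hk⟩
      refine ⟨k, ?_⟩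
      apply Multiplicative.toAdd.injective
      simpa using hk
  rw [← hrange, ← Subgroup.index_comap, hcomap, key, AddSubgroup.index_toSubgroup,
    Int.index_zmultiples, Int.natAbs_natCast]

/-- If `x` has infinite order, `d, r > 0`, and `⟨x⟩ ∩ ⟨y⟩ = ⟨x^d⟩ = ⟨y^d⟩`, then
`⟨x^r⟩ ∩ ⟨y^r⟩ = ⟨x^{rd/gcd(r,d)}⟩`, and the index of `⟨x^r⟩ ∩ ⟨y^r⟩` in `⟨x^r⟩`
equals `d / gcd(r,d)`. -/
theorem zpowers_pow_inter {G : Type*} [Group G] (x y : G) (hx : ¬ IsOfFinOrder x)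
    (d r : ℕ) (hd : 0 < d) (hr : 0 < r)
    (h1 : Subgroup.zpowers x ⊓ Subgroup.zpowers y = Subgroup.zpowers (x ^ d))
    (h2 : Subgroup.zpowers x ⊓ Subgroup.zpowers y = Subgroup.zpowers (y ^ d)) :
    Subgroup.zpowers (x ^ r) ⊓ Subgroup.zpowers (y ^ r)
        = Subgroup.zpowers (x ^ (r * d / Nat.gcd r d)) ∧
      (Subgroup.zpowers (y ^ r)).relIndex (Subgroup.zpowers (x ^ r))
        = d / Nat.gcd r d := by
  have hinj : Function.Injective (fun n : ℤ => x ^ n) :=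
    injective_zpow_iff_not_isOfFinOrder.2 hx
  set g := Nat.gcd r d with hg
  set L := Nat.lcm r d with hLdef
  have hL : r * d / Nat.gcd r d = L := rfl
  have hrL : r ∣ L := Nat.dvd_lcm_left r d
  have hdL : d ∣ L := Nat.dvd_lcm_right r d
  -- x^d = y^d or x^d = (y^d)⁻¹
  have heq : Subgroup.zpowers (x ^ d) = Subgroup.zpowers (y ^ d) := h1.symm.trans h2
  obtain ⟨k, hk⟩ : x ^ d ∈ Subgroup.zpowers (y ^ d) := by
    rw [← heq]; exact Subgroup.mem_zpowers _
  obtain ⟨j, hj⟩ : y ^ d ∈ Subgroup.zpowers (x ^ d) := by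
    rw [heq]; exact Subgroup.mem_zpowers _
  dsimp only at hk hj
  -- hk : (y^d)^k = x^d, hj : (x^d)^j = y^d
  have hd' : (d : ℤ) ≠ 0 := by exact_mod_cast hd.ne'
  have hjk : j * k = 1 := by
    have hxx : x ^ ((d : ℤ) * (j * k)) = x ^ ((d : ℤ) * 1) := by
      rw [mul_one, zpow_mul, zpow_natCast, zpow_mul, hj, hk]
    exact mul_left_cancel₀ hd' (hinj hxx)
  have hkcase : k = 1 ∨ k = -1 := by
    rcases Int.eq_one_or_neg_one_of_mul_eq_one' hjk with ⟨_, h⟩ | ⟨_, h⟩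
    · exact Or.inl h
    · exact Or.inr h
  -- ⟨x^L⟩ ≤ both sides
  have hxLr : x ^ L ∈ Subgroup.zpowers (x ^ r) := by
    rw [← Nat.mul_div_cancel' hrL, pow_mul]
    exact Subgroup.pow_mem _ (Subgroup.mem_zpowers _) _
  have hyLr : y ^ L ∈ Subgroup.zpowers (y ^ r) := by
    rw [← Nat.mul_div_cancel' hrL, pow_mul]
    exact Subgroup.pow_mem _ (Subgroup.mem_zpowers _) _
  have hxLd : x ^ L = (x ^ d) ^ (L / d) := by
    rw [← pow_mul, Nat.mul_div_cancel' hdL]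
  have hxLy : x ^ L ∈ Subgroup.zpowers (y ^ r) := by
    rcases hkcase with h | h
    · subst h
      rw [zpow_one] at hk
      rw [hxLd, ← hk]
      rw [← pow_mul, Nat.mul_div_cancel' hdL]
      exact hyLr
    · subst h
      rw [zpow_neg_one] at hk
      rw [hxLd, ← hk, ← inv_pow, ← pow_mul, Nat.mul_div_cancel' hdL, inv_pow]
      exact inv_mem hyLr
  have hle : Subgroup.zpowers (x ^ L)
      ≤ Subgroup.zpowers (x ^ r) ⊓ Subgroup.zpowers (y ^ r) := by
    rw [Subgroup.zpowers_le]
    exact ⟨hxLr, hxLy⟩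
  -- other inclusion
  have hge : Subgroup.zpowers (x ^ r) ⊓ Subgroup.zpowers (y ^ r)
      ≤ Subgroup.zpowers (x ^ L) := by
    rintro z ⟨⟨a, ha⟩, ⟨b, hb⟩⟩
    dsimp only at ha hb
    have hza : x ^ ((r : ℤ) * a) = z := by rw [zpow_mul, zpow_natCast]; exact ha
    have hzy : z ∈ Subgroup.zpowers x ⊓ Subgroup.zpowers y := by
      constructor
      · exact ⟨(r : ℤ) * a, hza⟩
      · exact ⟨(r : ℤ) * b, by show y ^ ((r : ℤ) * b) = z; rw [zpow_mul, zpow_natCast]; exact hb⟩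
    rw [h1] at hzy
    obtain ⟨c, hc⟩ := hzy
    dsimp only at hc
    have hzc : x ^ ((d : ℤ) * c) = z := by rw [zpow_mul, zpow_natCast]; exact hc
    have heqexp : (r : ℤ) * a = (d : ℤ) * c := hinj (show x ^ ((r : ℤ) * a) = x ^ ((d : ℤ) * c) by rw [hza, hzc])
    have hdvd : (L : ℤ) ∣ (r : ℤ) * a := by
      have h1' : (r : ℤ) ∣ (r : ℤ) * a := Dvd.intro a rfl
      have h2' : (d : ℤ) ∣ (r : ℤ) * a := ⟨c, heqexp⟩
      have := Int.natCast_dvd.2 (Int.lcm_dvd (Int.dvd_natAbs.2 h1') (Int.dvd_natAbs.2 h2'))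
      simpa [Int.lcm, hLdef] using this
    obtain ⟨e, he⟩ := hdvd
    refine ⟨e, ?_⟩
    show (x ^ L) ^ e = z
    rw [← hza, he, zpow_mul, zpow_natCast]
  have hmain : Subgroup.zpowers (x ^ r) ⊓ Subgroup.zpowers (y ^ r)
      = Subgroup.zpowers (x ^ L) := le_antisymm hge hle
  refine ⟨by rw [hL]; exact hmain, ?_⟩
  -- index computation
  have hxr : ¬ IsOfFinOrder (x ^ r) := by
    rw [isOfFinOrder_pow]
    push_neg
    exact ⟨hx, hr.ne'⟩
  have hLr : x ^ L = (x ^ r) ^ (L / r) := by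
    rw [← pow_mul, Nat.mul_div_cancel' hrL]
  have hLrd : L / r = d / g := by
    rw [hLdef, Nat.lcm, hg, Nat.mul_div_assoc r (Nat.gcd_dvd_right r d),
      Nat.mul_div_cancel_left _ hr]
  rw [← Subgroup.inf_relIndex_right, inf_comm, hmain, hLr,
    relindex_zpowers_pow_aux _ hxr, hLrd]
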